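/- arXiv:1405.0912 — 2 statements merged into one kernel-verified Lean document; each statement's English description precedes it below -/
import Mathlib

section
/- If a group Γ satisfies a nontrivial law, then it satisfies a nontrivial law in two letters: if there exist n ≥ 1 and a nontrivial element w of the free group F_n on n generators such that φ(w) = 1 for every homomorphism φ : F_n → Γ, then there exists a nontrivial element w' of the free group F₂ on two generators such that ψ(w') = 1 for every homomorphism ψ : F₂ → Γ. -/
open FreeGroup SemidirectProduct

/-- The shift automorphism action of `Multiplicative ℤ` on `FreeGroup ℤ`. -/
noncomputable def shiftAct : Multiplicative ℤ →* MulAut (FreeGroup ℤ) :=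
  zpowersHom _ (freeGroupCongr (Equiv.addRight (1 : ℤ)))

lemma shift_pow (m x : ℤ) :
    (((freeGroupCongr (Equiv.addRight (1 : ℤ)) : MulAut (FreeGroup ℤ)) ^ m))
      (FreeGroup.of x) = FreeGroup.of (x + m) := by
  induction m using Int.induction_on generalizing x with
  | zero => simp
  | succ k ih =>
      rw [zpow_add_one]
      have : (((freeGroupCongr (Equiv.addRight (1 : ℤ)) : MulAut (FreeGroup ℤ)) ^ (k : ℤ)) *
          (freeGroupCongr (Equiv.addRight (1 : ℤ)))) (FreeGroup.of x)
          = ((freeGroupCongr (Equiv.addRight (1 : ℤ)) : MulAut (FreeGroup ℤ)) ^ (k : ℤ))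
            ((freeGroupCongr (Equiv.addRight (1 : ℤ))) (FreeGroup.of x)) := rfl
      rw [this]
      have h1 : (freeGroupCongr (Equiv.addRight (1 : ℤ))) (FreeGroup.of x)
          = FreeGroup.of (x + 1) := by simp [freeGroupCongr]
      rw [h1, ih (x+1)]; congr 1; ring
  | pred k ih =>
      rw [zpow_sub_one]
      have : (((freeGroupCongr (Equiv.addRight (1 : ℤ)) : MulAut (FreeGroup ℤ)) ^ (-(k : ℤ))) *
          (freeGroupCongr (Equiv.addRight (1 : ℤ)))⁻¹) (FreeGroup.of x)
          = ((freeGroupCongr (Equiv.addRight (1 : ℤ)) : MulAut (FreeGroup ℤ)) ^ (-(k : ℤ)))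
            ((freeGroupCongr (Equiv.addRight (1 : ℤ)))⁻¹ (FreeGroup.of x)) := rfl
      rw [this]
      have h1 : ((freeGroupCongr (Equiv.addRight (1 : ℤ)) : MulAut (FreeGroup ℤ)))⁻¹
          (FreeGroup.of x) = FreeGroup.of (x - 1) := by
        rw [MulAut.inv_def, freeGroupCongr_symm]
        simp [freeGroupCongr, sub_eq_add_neg]
      rw [h1, ih (x-1)]; congr 1; ring

/-- If a group satisfies a nontrivial law in `n ≥ 1` letters, then it satisfies a
nontrivial law in two letters. -/
theorem law_in_two_letters
    {Γ : Type*} [Group Γ] (n : ℕ) (hn : 1 ≤ n)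
    (w : FreeGroup (Fin n)) (hw : w ≠ 1)
    (hlaw : ∀ φ : FreeGroup (Fin n) →* Γ, φ w = 1) :
    ∃ w' : FreeGroup (Fin 2), w' ≠ 1 ∧ ∀ ψ : FreeGroup (Fin 2) →* Γ, ψ w' = 1 := by
  classical
  set a : FreeGroup (Fin 2) := FreeGroup.of 0
  set b : FreeGroup (Fin 2) := FreeGroup.of 1
  set ι : FreeGroup (Fin n) →* FreeGroup (Fin 2) :=
    FreeGroup.lift (fun i : Fin n => b ^ (i : ℤ) * a * (b ^ (i : ℤ))⁻¹)
  refine ⟨ι w, ?_, ?_⟩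
  · -- nontriviality, via the semidirect product FreeGroup ℤ ⋊ ℤ
    set G := FreeGroup ℤ ⋊[shiftAct] Multiplicative ℤ
    set π : FreeGroup (Fin 2) →* G :=
      FreeGroup.lift (fun i : Fin 2 =>
        if i = 0 then SemidirectProduct.inl (FreeGroup.of (0 : ℤ))
        else SemidirectProduct.inr (Multiplicative.ofAdd 1))
    have key : π.comp ι
        = SemidirectProduct.inl.comp (FreeGroup.map (fun i : Fin n => (i : ℤ))) := by
      apply FreeGroup.ext_hom
      intro i
      have hπa : π a = SemidirectProduct.inl (FreeGroup.of (0 : ℤ)) := by simp [π, a]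
      have hπb : π b = SemidirectProduct.inr (Multiplicative.ofAdd 1) := by simp [π, b]
      have hshift : shiftAct (Multiplicative.ofAdd (1 : ℤ) ^ (i : ℤ)) (FreeGroup.of (0 : ℤ))
          = FreeGroup.of ((i : ℤ)) := by
        have h3 : shiftAct (Multiplicative.ofAdd (1 : ℤ) ^ (i : ℤ))
            = (freeGroupCongr (Equiv.addRight (1 : ℤ))) ^ (i : ℤ) := by
          simp [shiftAct]
        rw [h3, shift_pow]
        simp
      calc (π.comp ι) (FreeGroup.of i)
          = π b ^ (i : ℤ) * π a * (π b ^ (i : ℤ))⁻¹ := by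
            simp [ι, map_mul, map_zpow]
        _ = SemidirectProduct.inr (Multiplicative.ofAdd (1:ℤ) ^ (i : ℤ)) *
              SemidirectProduct.inl (FreeGroup.of (0 : ℤ)) *
              SemidirectProduct.inr ((Multiplicative.ofAdd (1:ℤ) ^ (i : ℤ))⁻¹) := by
            rw [hπa, hπb, ← map_zpow, ← MonoidHom.map_inv]
        _ = SemidirectProduct.inl (shiftAct (Multiplicative.ofAdd (1:ℤ) ^ (i : ℤ))
              (FreeGroup.of (0 : ℤ))) := (SemidirectProduct.inl_aut _ _).symm
        _ = SemidirectProduct.inl (FreeGroup.of ((i : ℤ))) := by rw [hshift]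
        _ = (SemidirectProduct.inl.comp (FreeGroup.map (fun i : Fin n => (i : ℤ))))
              (FreeGroup.of i) := by simp
    intro hcon
    have h1 : ((SemidirectProduct.inl.comp (FreeGroup.map (fun i : Fin n => (i : ℤ))))
        : FreeGroup (Fin n) →* G) w = 1 := by
      rw [← key]; simp [hcon]
    have h2 : FreeGroup.map (fun i : Fin n => (i : ℤ)) w = 1 :=
      SemidirectProduct.inl_injective (by simpa using h1)
    have hinj : Function.Injective (fun i : Fin n => (i : ℤ)) := by
      intro x y h
      simp only at h
      exact Fin.ext (by exact_mod_cast h)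
    have : Nonempty (Fin n) := ⟨⟨0, hn⟩⟩
    obtain ⟨g, hg⟩ := hinj.hasLeftInverse
    have h4 : FreeGroup.map g (FreeGroup.map (fun i : Fin n => (i : ℤ)) w) = w := by
      rw [FreeGroup.map.comp]
      have h5 : (g ∘ fun i : Fin n => (i : ℤ)) = id := funext hg
      rw [h5, FreeGroup.map.id]
    rw [h2, MonoidHom.map_one] at h4
    exact hw h4.symm
  · intro ψ
    simpa using hlaw (ψ.comp ι)
end

section
/- Let Γ be a group of orientation-preserving homeomorphisms of the real line without a global fixed point, and suppose there exists a nonempty, closed, discrete subset K of ℝ that is invariant under every element of Γ. Then Γ admits a surjective group homomorphism onto ℤ. -/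
/-- A group of orientation-preserving homeomorphisms of the real line (formalized as
order-isomorphisms of `ℝ`) without a global fixed point that preserves a nonempty,
closed, discrete subset `K ⊆ ℝ` admits a surjective homomorphism onto `ℤ`. -/
theorem surjects_onto_int_of_invariant_discrete_set
    (Γ : Subgroup (ℝ ≃o ℝ))
    (hnofix : ¬ ∃ x : ℝ, ∀ g ∈ Γ, g x = x)
    (K : Set ℝ) (hne : K.Nonempty) (hcl : IsClosed K)
    (hdisc : ∀ x ∈ K, ∃ ε > (0:ℝ), ∀ y ∈ K, |y - x| < ε → y = x)
    (hinv : ∀ g ∈ Γ, (fun x : ℝ => g x) '' K = K) :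
    ∃ φ : ↥Γ →* Multiplicative ℤ, Function.Surjective φ := by
  classical
  -- the action preserves K
  have hmem : ∀ g : ↥Γ, ∀ x ∈ K, (g : ℝ ≃o ℝ) x ∈ K := by
    intro g x hx
    have h := hinv g g.2
    rw [← h]; exact ⟨x, hx, rfl⟩
  have hmem' : ∀ g : ↥Γ, ∀ x ∈ K, (g : ℝ ≃o ℝ).symm x ∈ K := by
    intro g x hx
    exact hmem g⁻¹ x hx
  -- K is unbounded above and below
  have hKa : ¬ BddAbove K := by
    intro hb
    have hs : sSup K ∈ K := hcl.csSup_mem hne hb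
    apply hnofix
    refine ⟨sSup K, fun g hg => ?_⟩
    have h1 : g (sSup K) ≤ sSup K := le_csSup hb (hmem ⟨g, hg⟩ _ hs)
    have h2 : g.symm (sSup K) ≤ sSup K := le_csSup hb (hmem' ⟨g, hg⟩ _ hs)
    have h3 : sSup K ≤ g (sSup K) := by
      calc sSup K = g (g.symm (sSup K)) := (g.apply_symm_apply _).symm
        _ ≤ g (sSup K) := g.monotone h2
    exact le_antisymm h1 h3
  have hKb : ¬ BddBelow K := by
    intro hb
    have hs : sInf K ∈ K := hcl.csInf_mem hne hb
    apply hnofix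
    refine ⟨sInf K, fun g hg => ?_⟩
    have h1 : sInf K ≤ g (sInf K) := csInf_le hb (hmem ⟨g, hg⟩ _ hs)
    have h2 : sInf K ≤ g.symm (sInf K) := csInf_le hb (hmem' ⟨g, hg⟩ _ hs)
    have h3 : g (sInf K) ≤ sInf K := by
      calc g (sInf K) ≤ g (g.symm (sInf K)) := g.monotone h2
        _ = sInf K := g.apply_symm_apply _
    exact le_antisymm h3 h1
  have hex_gt : ∀ x : ℝ, ∃ y ∈ K, x < y := not_bddAbove_iff.mp hKa
  have hex_lt : ∀ x : ℝ, ∃ y ∈ K, y < x := not_bddBelow_iff.mp hKb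
  -- successor and predecessor maps
  set S : ℝ → ℝ := fun x => sInf (K ∩ Set.Ioi x) with hSdef
  set P : ℝ → ℝ := fun x => sSup (K ∩ Set.Iio x) with hPdef
  have hSne : ∀ x, (K ∩ Set.Ioi x).Nonempty := by
    intro x; obtain ⟨y, hy, hxy⟩ := hex_gt x; exact ⟨y, hy, hxy⟩
  have hPne : ∀ x, (K ∩ Set.Iio x).Nonempty := by
    intro x; obtain ⟨y, hy, hxy⟩ := hex_lt x; exact ⟨y, hy, hxy⟩
  have hSbdd : ∀ x, BddBelow (K ∩ Set.Ioi x) := fun x => ⟨x, fun y hy => le_of_lt hy.2⟩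
  have hPbdd : ∀ x, BddAbove (K ∩ Set.Iio x) := fun x => ⟨x, fun y hy => le_of_lt hy.2⟩
  have hsubK : ∀ s : Set ℝ, s ⊆ K → closure s ⊆ K := by
    intro s hs
    have h := closure_mono hs
    rwa [hcl.closure_eq] at h
  have hSK : ∀ x, S x ∈ K := fun x =>
    hsubK _ Set.inter_subset_left (csInf_mem_closure (hSne x) (hSbdd x))
  have hPK : ∀ x, P x ∈ K := fun x =>
    hsubK _ Set.inter_subset_left (csSup_mem_closure (hPne x) (hPbdd x))
  have hSle : ∀ x, ∀ y ∈ K, x < y → S x ≤ y := fun x y hy hxy => csInf_le (hSbdd x) ⟨hy, hxy⟩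
  have hPge : ∀ x, ∀ y ∈ K, y < x → y ≤ P x := fun x y hy hxy => le_csSup (hPbdd x) ⟨hy, hxy⟩
  have hSge : ∀ x, x ≤ S x := fun x => le_csInf (hSne x) (fun y hy => le_of_lt hy.2)
  have hPle : ∀ x, P x ≤ x := fun x => csSup_le (hPne x) (fun y hy => le_of_lt hy.2)
  have hSgt : ∀ x ∈ K, x < S x := by
    intro x hx
    rcases lt_or_eq_of_le (hSge x) with h | h
    · exact h
    · exfalso
      obtain ⟨ε, hε, hερ⟩ := hdisc x hx
      have h1 : S x < x + ε := by rw [← h]; linarith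
      obtain ⟨y, hy, hyε⟩ := exists_lt_of_csInf_lt (hSne x) h1
      have hxy : x < y := hy.2
      have : y = x := hερ y hy.1 (by rw [abs_sub_lt_iff]; constructor <;> linarith)
      linarith [this ▸ hxy]
  have hPlt : ∀ x ∈ K, P x < x := by
    intro x hx
    rcases lt_or_eq_of_le (hPle x) with h | h
    · exact h
    · exfalso
      obtain ⟨ε, hε, hερ⟩ := hdisc x hx
      have h1 : x - ε < P x := by rw [h]; linarith
      obtain ⟨y, hy, hyε⟩ := exists_lt_of_lt_csSup (hPne x) h1
      have hxy : y < x := hy.2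
      have : y = x := hερ y hy.1 (by rw [abs_sub_lt_iff]; constructor <;> linarith)
      linarith [this ▸ hxy]
  -- S and P are mutually inverse on K
  have hPS : ∀ x ∈ K, P (S x) = x := by
    intro x hx
    have h1 : x ≤ P (S x) := hPge (S x) x hx (hSgt x hx)
    have h2 : P (S x) ≤ x := by
      by_contra hlt
      push_neg at hlt
      have := hSle x (P (S x)) (hPK _) hlt
      exact absurd (hPlt (S x) (hSK x)) (not_lt.mpr this)
    exact le_antisymm h2 h1
  have hSP : ∀ x ∈ K, S (P x) = x := by
    intro x hx
    have h1 : S (P x) ≤ x := hSle (P x) x hx (hPlt x hx)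
    have h2 : x ≤ S (P x) := by
      by_contra hlt
      push_neg at hlt
      have := hPge x (S (P x)) (hSK _) hlt
      exact absurd (hSgt (P x) (hPK x)) (not_lt.mpr this)
    exact le_antisymm h1 h2
  -- the action commutes with S and P on K
  have hgS : ∀ g : ↥Γ, ∀ x ∈ K, (g : ℝ ≃o ℝ) (S x) = S ((g : ℝ ≃o ℝ) x) := by
    intro g x hx
    have h1 : S ((g : ℝ ≃o ℝ) x) ≤ (g : ℝ ≃o ℝ) (S x) :=
      hSle _ _ (hmem g _ (hSK x)) ((g : ℝ ≃o ℝ).strictMono (hSgt x hx))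
    have h2 : (g : ℝ ≃o ℝ) (S x) ≤ S ((g : ℝ ≃o ℝ) x) := by
      have hy : (g : ℝ ≃o ℝ).symm (S ((g : ℝ ≃o ℝ) x)) ∈ K := hmem' g _ (hSK _)
      have hxy : x < (g : ℝ ≃o ℝ).symm (S ((g : ℝ ≃o ℝ) x)) := by
        have := (g : ℝ ≃o ℝ).symm.strictMono (hSgt ((g : ℝ ≃o ℝ) x) (hmem g x hx))
        rwa [(g : ℝ ≃o ℝ).symm_apply_apply] at this
      have := hSle x _ hy hxy
      calc (g : ℝ ≃o ℝ) (S x) ≤ (g : ℝ ≃o ℝ) ((g : ℝ ≃o ℝ).symm (S ((g : ℝ ≃o ℝ) x))) :=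
            (g : ℝ ≃o ℝ).monotone this
        _ = S ((g : ℝ ≃o ℝ) x) := (g : ℝ ≃o ℝ).apply_symm_apply _
    exact le_antisymm h2 h1
  have hgP : ∀ g : ↥Γ, ∀ x ∈ K, (g : ℝ ≃o ℝ) (P x) = P ((g : ℝ ≃o ℝ) x) := by
    intro g x hx
    have h := hgS g (P x) (hPK x)
    rw [hSP x hx] at h
    have := congrArg P h
    rw [hPS ((g : ℝ ≃o ℝ) (P x)) (hmem g _ (hPK x))] at this
    exact this.symm
  -- enumeration of K by ℤ
  obtain ⟨k₀, hk₀⟩ := hne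
  let f : Equiv.Perm {x // x ∈ K} :=
    { toFun := fun x => ⟨S x, hSK x⟩
      invFun := fun x => ⟨P x, hPK x⟩
      left_inv := fun x => Subtype.ext (hPS x x.2)
      right_inv := fun x => Subtype.ext (hSP x x.2) }
  let e : ℤ → ℝ := fun n => ((f ^ n) ⟨k₀, hk₀⟩ : {x // x ∈ K})
  have heK : ∀ n, e n ∈ K := fun n => ((f ^ n) ⟨k₀, hk₀⟩).2
  have he0 : e 0 = k₀ := rfl
  have heS : ∀ n : ℤ, e (n + 1) = S (e n) := by
    intro n
    have h : f ^ (n + 1) = f * f ^ n := by rw [add_comm, zpow_one_add]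
    show (((f ^ (n+1)) ⟨k₀, hk₀⟩ : {x // x ∈ K}) : ℝ) = _
    rw [h]
    rfl
  have heP : ∀ n : ℤ, e (n - 1) = P (e n) := by
    intro n
    have h := heS (n - 1)
    rw [sub_add_cancel] at h
    rw [h, hPS _ (heK (n-1))]
  have hemono : StrictMono e := strictMono_int_of_lt_succ (fun n => by
    rw [heS]; exact hSgt _ (heK n))
  have heinj : Function.Injective e := hemono.injective
  -- e is surjective onto K
  have hesurj : ∀ y ∈ K, ∃ n : ℤ, e n = y := by
    intro y hy
    rcases le_or_gt k₀ y with hky | hky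
    · -- find N with y < e N
      have hupper : ∃ N : ℕ, y < e (N : ℤ) := by
        by_contra hc
        push_neg at hc
        set u : ℕ → ℝ := fun n => e (n : ℤ) with hu
        have humono : Monotone u := fun a b hab =>
          (hemono.monotone (by exact_mod_cast hab))
        have hubdd : BddAbove (Set.range u) := ⟨y, by rintro _ ⟨n, rfl⟩; exact hc n⟩
        have hten := tendsto_atTop_ciSup humono hubdd
        set t : ℝ := ⨆ n, u n with ht
        have htK : t ∈ K := hcl.mem_of_tendsto hten
          (Filter.Eventually.of_forall (fun n => heK _))
        obtain ⟨ε, hε, hερ⟩ := hdisc t htK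
        obtain ⟨N, hN⟩ := Metric.tendsto_atTop.mp hten ε hε
        have h1 : u N = t := hερ (u N) (heK _) (by
          have := hN N le_rfl
          rwa [Real.dist_eq] at this)
        have h2 : u (N + 1) ≤ t := le_ciSup hubdd (N + 1)
        have h3 : u N < u (N + 1) := by
          have : ((N : ℤ)) < ((N : ℤ) + 1) := by linarith
          have := hemono this
          simpa [hu, Nat.cast_add] using (by exact_mod_cast this : u N < e ((N:ℤ)+1))
        rw [h1] at h3
        linarith
      set Q : ℕ → Prop := fun N => y < e (N : ℤ) with hQ
      have hQd : DecidablePred Q := fun N => Classical.dec _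
      obtain ⟨N, hNy⟩ := hupper
      have hex : ∃ N, Q N := ⟨N, hNy⟩
      set M := Nat.find hex with hM
      have hMQ : y < e (M : ℤ) := Nat.find_spec hex
      have hM0 : M ≠ 0 := by
        intro h0
        rw [h0] at hMQ
        simp only [Nat.cast_zero, he0] at hMQ
        linarith
      have hMpred : ¬ Q (M - 1) := Nat.find_min hex (Nat.sub_lt (Nat.pos_of_ne_zero hM0) one_pos)
      have hcast : ((M - 1 : ℕ) : ℤ) = (M : ℤ) - 1 := by
        have : 1 ≤ M := Nat.pos_of_ne_zero hM0
        omega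
      have hle : e ((M : ℤ) - 1) ≤ y := by
        rw [← hcast]; exact not_lt.mp hMpred
      rcases lt_or_eq_of_le hle with hlt | heq
      · exfalso
        have := hSle (e ((M:ℤ) - 1)) y hy hlt
        rw [← heS ((M:ℤ) - 1), sub_add_cancel] at this
        linarith
      · exact ⟨(M : ℤ) - 1, heq⟩
    · -- y < k₀ : go downwards
      have hlower : ∃ N : ℕ, e (-(N : ℤ)) < y := by
        by_contra hc
        push_neg at hc
        set u : ℕ → ℝ := fun n => e (-(n : ℤ)) with hu
        have huanti : Antitone u := fun a b hab =>
          (hemono.monotone (by simp only [neg_le_neg_iff]; exact_mod_cast hab))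
        have hubdd : BddBelow (Set.range u) := ⟨y, by rintro _ ⟨n, rfl⟩; exact hc n⟩
        have hten := tendsto_atTop_ciInf huanti hubdd
        set t : ℝ := ⨅ n, u n with ht
        have htK : t ∈ K := hcl.mem_of_tendsto hten
          (Filter.Eventually.of_forall (fun n => heK _))
        obtain ⟨ε, hε, hερ⟩ := hdisc t htK
        obtain ⟨N, hN⟩ := Metric.tendsto_atTop.mp hten ε hε
        have h1 : u N = t := hερ (u N) (heK _) (by
          have := hN N le_rfl
          rwa [Real.dist_eq] at this)
        have h2 : t ≤ u (N + 1) := ciInf_le hubdd (N + 1)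
        have h3 : u (N + 1) < u N := by
          have : (-(((N:ℕ) + 1 : ℕ) : ℤ)) < (-(N : ℤ)) := by push_cast; linarith
          exact hemono this
        rw [h1] at h3
        linarith
      set Q : ℕ → Prop := fun N => e (-(N : ℤ)) < y with hQ
      obtain ⟨N, hNy⟩ := hlower
      have hex : ∃ N, Q N := ⟨N, hNy⟩
      set M := Nat.find hex with hM
      have hMQ : e (-(M : ℤ)) < y := Nat.find_spec hex
      have hM0 : M ≠ 0 := by
        intro h0
        rw [h0] at hMQ
        simp only [Nat.cast_zero, neg_zero, he0] at hMQ
        linarith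
      have hMpred : ¬ Q (M - 1) := Nat.find_min hex (Nat.sub_lt (Nat.pos_of_ne_zero hM0) one_pos)
      have hcast : ((M - 1 : ℕ) : ℤ) = (M : ℤ) - 1 := by
        have : 1 ≤ M := Nat.pos_of_ne_zero hM0
        omega
      have hge : y ≤ e (-((M : ℤ) - 1)) := by
        have h' : ¬ e (-((M - 1 : ℕ) : ℤ)) < y := hMpred
        rw [hcast] at h'
        exact not_lt.mp h'
      have hstep : e (-((M:ℤ)) + 1) = S (e (-(M:ℤ))) := heS _
      have hsx : S (e (-(M:ℤ))) ≤ y := hSle _ y hy hMQ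
      have : e (-((M:ℤ) - 1)) = S (e (-(M:ℤ))) := by
        rw [← hstep]; ring_nf
      refine ⟨-((M:ℤ) - 1), ?_⟩
      rw [this]
      exact le_antisymm hsx (this ▸ hge)
  -- translation number
  have hτex : ∀ g : ↥Γ, ∃ n : ℤ, e n = (g : ℝ ≃o ℝ) k₀ := fun g =>
    hesurj _ (hmem g k₀ hk₀)
  set τ : ↥Γ → ℤ := fun g => (hτex g).choose with hτdef
  have hτe : ∀ g, e (τ g) = (g : ℝ ≃o ℝ) k₀ := fun g => (hτex g).choose_spec
  -- translation lemma
  have htr : ∀ g : ↥Γ, ∀ n : ℤ, (g : ℝ ≃o ℝ) (e n) = e (n + τ g) := by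
    intro g n
    induction n using Int.induction_on with
    | zero => rw [he0, ← hτe g, zero_add]
    | succ k ih =>
      rw [heS, hgS g _ (heK _), ih, ← heS]
      congr 1
      ring
    | pred k ih =>
      rw [show (-(k:ℤ) - 1) = (-(k:ℤ)) - 1 from rfl, heP, hgP g _ (heK _), ih, ← heP]
      congr 1
      ring
  -- τ is additive
  have hτmul : ∀ g h : ↥Γ, τ (g * h) = τ g + τ h := by
    intro g h
    apply heinj
    rw [hτe (g * h)]
    have : ((g * h : ↥Γ) : ℝ ≃o ℝ) k₀ = (g : ℝ ≃o ℝ) ((h : ℝ ≃o ℝ) k₀) := rfl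
    rw [this, ← hτe h, htr g (τ h)]
    congr 1
    ring
  have hτone : τ 1 = 0 := by
    apply heinj
    rw [hτe 1, he0]
    rfl
  -- τ is not identically zero
  have hτne : ∃ g : ↥Γ, τ g ≠ 0 := by
    by_contra hc
    push_neg at hc
    
    apply hnofix
    refine ⟨k₀, fun g hg => ?_⟩
    have := hτe ⟨g, hg⟩
    rw [hc ⟨g, hg⟩, he0] at this
    exact this.symm
  -- the range of τ is a subgroup of ℤ
  have hτinv : ∀ g : ↥Γ, τ g⁻¹ = -(τ g) := by
    intro g
    have := hτmul g g⁻¹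
    rw [mul_inv_cancel, hτone] at this
    linarith
  let H : AddSubgroup ℤ :=
    { carrier := Set.range τ
      zero_mem' := ⟨1, hτone⟩
      add_mem' := by rintro a b ⟨g, rfl⟩ ⟨h, rfl⟩; exact ⟨g * h, hτmul g h⟩
      neg_mem' := by rintro a ⟨g, rfl⟩; exact ⟨g⁻¹, hτinv g⟩ }
  obtain ⟨n, hn⟩ := Int.subgroup_cyclic H
  have hn0 : n ≠ 0 := by
    intro h0
    obtain ⟨g, hg⟩ := hτne
    have hgH : τ g ∈ H := ⟨g, rfl⟩
    rw [hn, h0] at hgH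
    rw [AddSubgroup.mem_closure_singleton] at hgH
    obtain ⟨m, hm⟩ := hgH
    simp at hm
    exact hg hm.symm
  have hdvd : ∀ g : ↥Γ, n ∣ τ g := by
    intro g
    have hgH : τ g ∈ H := ⟨g, rfl⟩
    rw [hn, AddSubgroup.mem_closure_singleton] at hgH
    obtain ⟨m, hm⟩ := hgH
    exact ⟨m, by rw [← hm]; rw [smul_eq_mul]; ring⟩
  have hnH : ∃ g₀ : ↥Γ, τ g₀ = n := by
    have : n ∈ H := by
      rw [hn, AddSubgroup.mem_closure_singleton]
      exact ⟨1, one_smul _ _⟩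
    exact this
  obtain ⟨g₀, hg₀⟩ := hnH
  -- τ of powers
  have hτpow : ∀ z : ℤ, τ (g₀ ^ z) = z * n := by
    intro z
    induction z using Int.induction_on with
    | zero => simpa using hτone
    | succ k ih =>
      rw [zpow_add_one, hτmul, ih, hg₀]
      ring
    | pred k ih =>
      rw [zpow_sub_one, hτmul, ih, hτinv, hg₀]
      ring
  -- the desired homomorphism
  refine ⟨{ toFun := fun g => Multiplicative.ofAdd (τ g / n)
            map_one' := by
              show Multiplicative.ofAdd (τ 1 / n) = 1
              rw [hτone]; simp
            map_mul' := by
              intro g h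
              obtain ⟨a, ha⟩ := hdvd g
              obtain ⟨b, hb⟩ := hdvd h
              have : τ (g * h) = n * (a + b) := by rw [hτmul, ha, hb]; ring
              simp only [this, ha, hb]
              rw [Int.mul_ediv_cancel_left _ hn0, Int.mul_ediv_cancel_left _ hn0,
                Int.mul_ediv_cancel_left _ hn0, ← ofAdd_add] }, ?_⟩
  intro m
  refine ⟨g₀ ^ (Multiplicative.toAdd m), ?_⟩
  show Multiplicative.ofAdd (τ (g₀ ^ (Multiplicative.toAdd m)) / n) = m
  rw [hτpow, Int.mul_ediv_cancel _ hn0]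
  simp
end
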